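/- Let θ be the real 2×2 matrix θ = [[1/3, −1/24], [2/3, 1/6]]. Its eigenvalues (over ℂ) are 1/4 + i/(4√3) and 1/4 − i/(4√3); in particular, every z ∈ ℂ with det(θ − z·I₂) = 0 satisfies |z| = 1/(2√3), so the spectral radius of θ equals 1/(2√3). -/

import Mathlib

open Real

/-- The eigenvalues over `ℂ` of `θ = [[1/3, -1/24], [2/3, 1/6]]` are
`1/4 ± i/(4√3)`; in particular every complex eigenvalue has modulus `1/(2√3)`,
which is thus the spectral radius of `θ`. -/
theorem stmt_8 (θ : Matrix (Fin 2) (Fin 2) ℝ)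
    (hθ : θ = !![1/3, -1/24; 2/3, 1/6]) :
    (∀ z : ℂ,
        ((θ.map (Complex.ofReal)) - z • (1 : Matrix (Fin 2) (Fin 2) ℂ)).det = 0 ↔
          (z = 1/4 + Complex.I / (4 * Real.sqrt 3) ∨
            z = 1/4 - Complex.I / (4 * Real.sqrt 3))) ∧
      ∀ z : ℂ,
        ((θ.map (Complex.ofReal)) - z • (1 : Matrix (Fin 2) (Fin 2) ℂ)).det = 0 →
          ‖z‖ = 1 / (2 * Real.sqrt 3) := by
  subst hθ
  set s : ℝ := Real.sqrt 3 with hs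
  have hs0 : (0:ℝ) < s := Real.sqrt_pos.mpr (by norm_num)
  have hs2 : (s:ℂ)^2 = 3 := by
    norm_cast
    rw [Real.sq_sqrt] <;> norm_num
  have hsne : (s:ℂ) ≠ 0 := by exact_mod_cast hs0.ne'
  have hdet : ∀ z : ℂ,
      ((!![1/3, -1/24; 2/3, 1/6] : Matrix (Fin 2) (Fin 2) ℝ).map (Complex.ofReal)
        - z • (1 : Matrix (Fin 2) (Fin 2) ℂ)).det
      = (1/4 + Complex.I / (4 * s) - z) * (1/4 - Complex.I / (4 * s) - z) := by
    intro z
    simp [Matrix.det_fin_two, Matrix.map_apply, Matrix.one_apply]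
    field_simp
    ring_nf
    rw [Complex.I_sq]
    ring_nf
    rw [hs2]
    ring
  have hiff : ∀ z : ℂ,
      ((!![1/3, -1/24; 2/3, 1/6] : Matrix (Fin 2) (Fin 2) ℝ).map (Complex.ofReal)
        - z • (1 : Matrix (Fin 2) (Fin 2) ℂ)).det = 0 ↔
      (z = 1/4 + Complex.I / (4 * s) ∨ z = 1/4 - Complex.I / (4 * s)) := by
    intro z
    rw [hdet z, mul_eq_zero, sub_eq_zero, sub_eq_zero]
    constructor
    · rintro (h | h) <;> [left; right] <;> exact h.symm
    · rintro (h | h) <;> [left; right] <;> exact h.symm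
  refine ⟨hiff, fun z hz => ?_⟩
  have hs2r : s^2 = 3 := by rw [hs, Real.sq_sqrt] <;> norm_num
  have habs : ∀ w : ℂ, w = 1/4 + Complex.I / (4 * s) ∨ w = 1/4 - Complex.I / (4 * s) →
      ‖w‖ = 1 / (2 * s) := by
    have key : ∀ b : ℝ, ‖(((1/4:ℝ):ℂ) + (b:ℂ) * Complex.I)‖ = Real.sqrt ((1/4)^2 + b^2) :=
      fun b => Complex.norm_add_mul_I _ _
    have e1 : (1:ℂ)/4 + Complex.I / (4 * s) = ((1/4:ℝ):ℂ) + ((1/(4*s):ℝ):ℂ) * Complex.I := by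
      push_cast; field_simp
    have e2 : (1:ℂ)/4 - Complex.I / (4 * s) = ((1/4:ℝ):ℂ) + ((-(1/(4*s)):ℝ):ℂ) * Complex.I := by
      push_cast; field_simp; ring
    have sq : ∀ b : ℝ, b^2 = (1/(4*s))^2 → Real.sqrt ((1/4)^2 + b^2) = 1/(2*s) := by
      intro b hb
      rw [hb, show (1/4:ℝ)^2 + (1/(4*s))^2 = (1/(2*s))^2 by
        field_simp; nlinarith [hs2r]]
      exact Real.sqrt_sq (by positivity)
    rintro w (rfl | rfl)
    · rw [e1, key, sq _ rfl]
    · rw [e2, key, sq _ (by ring)]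
  exact habs z ((hiff z).mp hz)
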